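/- Under the dominance condition O ≥ M almost surely together with Assumptions 1–3 and the limit/jump conditions (Assumption 4'), the fuzzy difference-in-discontinuities estimand τ = (Ỹ⁺−Ỹ⁻)/(T̃⁺−T̃⁻) − (Ȳ⁺−Ȳ⁻)/(M̄⁺−M̄⁻) identifies the average treatment effect ATE_O(t) = E[Y(1,1)−Y(0,1)|X=t]. -/

import Mathlib

open MeasureTheory Filter Topology

/-- Theorem 2: Under the dominance condition `O ≥ M` a.s. together with
Assumptions 1–3 and Assumption 4' (existence of the limits, nondegenerate jumps of `O` and `M`,
and `Õ⁺−Õ⁻ = M̃⁺−M̃⁻ = M̄⁺−M̄⁻`), the fuzzy difference-in-discontinuities estimand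
`τ = (Ỹ⁺−Ỹ⁻)/(T̃⁺−T̃⁻) − (Ȳ⁺−Ȳ⁻)/(M̄⁺−M̄⁻)` identifies `ATE_O(t) = E[Y(1,1)−Y(0,1)|X=t]`.
The young-cohort conditional means given `X = x` are modeled via conditional laws `ν x ≪ μ`. -/
theorem fuzzy_diff_in_disc_identification_dominance
    {Ω : Type*} [MeasurableSpace Ω]
    (μ : Measure Ω) [IsProbabilityMeasure μ]
    (ν : ℝ → Measure Ω) [∀ x, IsProbabilityMeasure (ν x)]
    (hν : ∀ x, ν x ≪ μ)
    (O M : Ω → ℝ) (hOmeas : Measurable O) (hMmeas : Measurable M)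
    (hO01 : ∀ ω, O ω = 0 ∨ O ω = 1) (hM01 : ∀ ω, M ω = 0 ∨ M ω = 1)
    -- Assumption 4' (iii), first part: dominance
    (hdom : ∀ᵐ ω ∂μ, M ω ≤ O ω)
    (t : ℝ)
    (y11 y10 y01 y00 z1 z0 : ℝ → ℝ)
    (EY EO EM ET EYb EMb : ℝ → ℝ)
    (hEO : ∀ x, EO x = ∫ ω, O ω ∂(ν x))
    (hEM : ∀ x, EM x = ∫ ω, M ω ∂(ν x))
    (hET : ∀ x, ET x = ∫ ω, O ω * M ω ∂(ν x))
    -- Assumption 1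
    (h11 : ContinuousAt y11 t) (h10 : ContinuousAt y10 t)
    (h01 : ContinuousAt y01 t) (h00 : ContinuousAt y00 t)
    (hz1 : ContinuousAt z1 t) (hz0 : ContinuousAt z0 t)
    -- Assumption 2 (switching identities)
    (hY : ∀ x, EY x = y00 x + EM x * (y01 x - y00 x) + EO x * (y10 x - y00 x)
        + ET x * (y11 x - y10 x - y01 x + y00 x))
    (hYb : ∀ x, EYb x = z0 x + EMb x * (z1 x - z0 x))
    -- Assumption 3
    (hA3 : z1 t - z0 t = y01 t - y00 t)
    -- Assumption 4' (i), (ii)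
    (Op Om Mp Mm Tp Tm Yp Ym Mbp Mbm Ybp Ybm : ℝ)
    (hOp : Tendsto EO (𝓝[>] t) (𝓝 Op)) (hOm : Tendsto EO (𝓝[<] t) (𝓝 Om))
    (hMp : Tendsto EM (𝓝[>] t) (𝓝 Mp)) (hMm : Tendsto EM (𝓝[<] t) (𝓝 Mm))
    (hTp : Tendsto ET (𝓝[>] t) (𝓝 Tp)) (hTm : Tendsto ET (𝓝[<] t) (𝓝 Tm))
    (hYp : Tendsto EY (𝓝[>] t) (𝓝 Yp)) (hYm : Tendsto EY (𝓝[<] t) (𝓝 Ym))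
    (hMbp : Tendsto EMb (𝓝[>] t) (𝓝 Mbp)) (hMbm : Tendsto EMb (𝓝[<] t) (𝓝 Mbm))
    (hYbp : Tendsto EYb (𝓝[>] t) (𝓝 Ybp)) (hYbm : Tendsto EYb (𝓝[<] t) (𝓝 Ybm))
    (hOne : Op ≠ Om) (hMne : Mp ≠ Mm) (hMbne : Mbp ≠ Mbm)
    -- Assumption 4' (iii), second part: equality of the O and M jumps across cohorts
    (hOMjump : Op - Om = Mp - Mm) (hMMbjump : Mp - Mm = Mbp - Mbm) :
    (Yp - Ym) / (Tp - Tm) - (Ybp - Ybm) / (Mbp - Mbm) = y11 t - y01 t := by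
  -- Step 1: O·M = M a.e., hence ET = EM
  have hOM_ae : ∀ᵐ ω ∂μ, O ω * M ω = M ω := by
    filter_upwards [hdom] with ω h
    rcases hM01 ω with hm | hm
    · simp [hm]
    · rcases hO01 ω with ho | ho
      · rw [hm, ho] at h; linarith
      · rw [hm, ho]; ring
  have hETM : ET = EM := by
    funext x
    rw [hET, hEM]
    exact integral_congr_ae (((hν x).ae_le) hOM_ae)
  -- limits of T agree with limits of M
  have hTpMp : Tp = Mp := tendsto_nhds_unique (hETM ▸ hTp) hMp
  have hTmMm : Tm = Mm := tendsto_nhds_unique (hETM ▸ hTm) hMm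
  -- Step 2: compute one-sided limits of EY
  have hyfun : ∀ (f : ℝ → ℝ), ContinuousAt f t →
      Tendsto f (𝓝[>] t) (𝓝 (f t)) ∧ Tendsto f (𝓝[<] t) (𝓝 (f t)) :=
    fun f hf => ⟨hf.tendsto.mono_left nhdsWithin_le_nhds,
      hf.tendsto.mono_left nhdsWithin_le_nhds⟩
  have hYexpr : EY = fun x => y00 x + EM x * (y01 x - y00 x) + EO x * (y10 x - y00 x)
      + ET x * (y11 x - y10 x - y01 x + y00 x) := funext hY
  have hYbexpr : EYb = fun x => z0 x + EMb x * (z1 x - z0 x) := funext hYb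
  have hYpv : Yp = y00 t + Mp * (y01 t - y00 t) + Op * (y10 t - y00 t)
      + Mp * (y11 t - y10 t - y01 t + y00 t) := by
    rw [hETM] at hYexpr
    refine tendsto_nhds_unique (hYexpr ▸ hYp) ?_
    exact ((((hyfun _ h00).1.add (hMp.mul (((hyfun _ h01).1).sub (hyfun _ h00).1))).add
      (hOp.mul (((hyfun _ h10).1).sub (hyfun _ h00).1))).add
      (hMp.mul ((((hyfun _ h11).1.sub (hyfun _ h10).1).sub (hyfun _ h01).1).add (hyfun _ h00).1)))
  have hYmv : Ym = y00 t + Mm * (y01 t - y00 t) + Om * (y10 t - y00 t)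
      + Mm * (y11 t - y10 t - y01 t + y00 t) := by
    rw [hETM] at hYexpr
    refine tendsto_nhds_unique (hYexpr ▸ hYm) ?_
    exact ((((hyfun _ h00).2.add (hMm.mul (((hyfun _ h01).2).sub (hyfun _ h00).2))).add
      (hOm.mul (((hyfun _ h10).2).sub (hyfun _ h00).2))).add
      (hMm.mul ((((hyfun _ h11).2.sub (hyfun _ h10).2).sub (hyfun _ h01).2).add (hyfun _ h00).2)))
  have hYbpv : Ybp = z0 t + Mbp * (z1 t - z0 t) := by
    refine tendsto_nhds_unique (hYbexpr ▸ hYbp) ?_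
    exact (hyfun _ hz0).1.add (hMbp.mul (((hyfun _ hz1).1).sub (hyfun _ hz0).1))
  have hYbmv : Ybm = z0 t + Mbm * (z1 t - z0 t) := by
    refine tendsto_nhds_unique (hYbexpr ▸ hYbm) ?_
    exact (hyfun _ hz0).2.add (hMbm.mul (((hyfun _ hz1).2).sub (hyfun _ hz0).2))
  -- Step 3: arithmetic
  have hMd : Mp - Mm ≠ 0 := sub_ne_zero.mpr hMne
  have hMbd : Mbp - Mbm ≠ 0 := sub_ne_zero.mpr hMbne
  have hYd : Yp - Ym = (Mp - Mm) * (y11 t - y00 t) := by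
    rw [hYpv, hYmv]
    linear_combination (y10 t - y00 t) * hOMjump
  have hYbd : Ybp - Ybm = (Mbp - Mbm) * (y01 t - y00 t) := by
    rw [hYbpv, hYbmv, ← hA3]; ring
  rw [hTpMp, hTmMm, hYd, hYbd]
  field_simp
  ring
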